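/- arXiv:1401.1561 — 4 statements merged into one kernel-verified Lean document; each statement's English description precedes it below -/
import Mathlib

section
/- Define for x, r ∈ ℝ³ with r ≠ x the Coulomb kernel E(p, r) = ‖r − p‖^(-3) • (r − p). Let a, b ∈ ℝ³ and let n = a × b. Then the derivative at h = 0 of the function h ↦ E(x + (h/2) • (n/‖n‖), r) − E(x − (h/2) • (n/‖n‖), r) (assuming n ≠ 0) equals ‖r − x‖^(-3) • ( (3/‖r−x‖²) ⟪r − x, n/‖n‖⟫ • (r − x) − (n/‖n‖) ). -/
open scoped RealInnerProductSpace

section Aux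

variable {E : Type*} [NormedAddCommGroup E] [InnerProductSpace ℝ E]

lemma norm_deriv_aux (v u : E) (hv : v ≠ 0) :
    HasDerivAt (fun t : ℝ => ‖v - t • u‖) (-(⟪v, u⟫ / ‖v‖)) 0 := by
  have hw : HasDerivAt (fun t : ℝ => v - t • u) (-u) 0 := by
    simpa using ((hasDerivAt_id (0:ℝ)).smul_const u).const_sub v
  have hq := hw.norm_sq
  have hne : ‖(fun t : ℝ => v - t • u) 0‖ ^ 2 ≠ 0 := by
    simp [hv, sub_ne_zero]
  have h := hq.sqrt hne
  have heq : (fun t : ℝ => Real.sqrt (‖v - t • u‖ ^ 2)) = fun t : ℝ => ‖v - t • u‖ := by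
    funext t; rw [Real.sqrt_sq (norm_nonneg _)]
  rw [heq] at h
  convert h using 1
  simp only [zero_smul, sub_zero]
  rw [Real.sqrt_sq (norm_nonneg _), inner_neg_right]
  ring

lemma coulomb_dir_deriv_aux (v u : E) (hv : v ≠ 0) :
    HasDerivAt (fun t : ℝ => ‖v - t • u‖ ^ (-3 : ℤ) • (v - t • u))
      (‖v‖ ^ (-3 : ℤ) • (((3 / ‖v‖ ^ 2) * ⟪v, u⟫) • v - u)) 0 := by
  have hw : HasDerivAt (fun t : ℝ => v - t • u) (-u) 0 := by
    simpa using ((hasDerivAt_id (0:ℝ)).smul_const u).const_sub v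
  have hn := norm_deriv_aux v u hv
  have hnz : ‖v‖ ≠ 0 := norm_ne_zero_iff.mpr hv
  have hzp : HasDerivAt (fun s : ℝ => s ^ (-3 : ℤ))
      ((-3 : ℝ) * ‖v - (0:ℝ) • u‖ ^ (-4 : ℤ)) ‖v - (0:ℝ) • u‖ := by
    have := hasDerivAt_zpow (-3) ‖v - (0:ℝ) • u‖ (Or.inl (by simpa using hnz))
    norm_num at this ⊢
    convert this using 2
  have hz := HasDerivAt.comp 0 hzp hn
  have h := hz.smul hw
  have h3 : (‖v‖:ℝ) ^ (-3:ℤ) = (‖v‖^3)⁻¹ := by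
    rw [zpow_neg]; norm_cast
  have h4 : (‖v‖:ℝ) ^ (-4:ℤ) = (‖v‖^4)⁻¹ := by
    rw [zpow_neg]; norm_cast
  convert h using 1
  · rfl
  simp only [zero_smul, sub_zero, Function.comp, h3, h4]
  match_scalars <;> field_simp <;> exact Or.inl (by ring)

end Aux

noncomputable def cross3 (a b : EuclideanSpace ℝ (Fin 3)) : EuclideanSpace ℝ (Fin 3) :=
  (WithLp.equiv 2 (Fin 3 → ℝ)).symm
    (crossProduct ((WithLp.equiv 2 (Fin 3 → ℝ)) a) ((WithLp.equiv 2 (Fin 3 → ℝ)) b))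

/-- The unit-charge Coulomb field at `r` of a point charge at `p`. -/
noncomputable def coulomb (p r : EuclideanSpace ℝ (Fin 3)) : EuclideanSpace ℝ (Fin 3) :=
  ‖r - p‖ ^ (-3 : ℤ) • (r - p)

theorem stmt3 (x r a b : EuclideanSpace ℝ (Fin 3)) (hrx : r ≠ x)
    (hab : cross3 a b ≠ 0) :
    HasDerivAt
      (fun h : ℝ =>
        coulomb (x + (h / 2) • (‖cross3 a b‖⁻¹ • cross3 a b)) r -
          coulomb (x - (h / 2) • (‖cross3 a b‖⁻¹ • cross3 a b)) r)
      (‖r - x‖ ^ (-3 : ℤ) •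
        (((3 / ‖r - x‖ ^ 2) * ⟪r - x, ‖cross3 a b‖⁻¹ • cross3 a b⟫) • (r - x) -
          ‖cross3 a b‖⁻¹ • cross3 a b)) 0 := by
  set u : EuclideanSpace ℝ (Fin 3) := ‖cross3 a b‖⁻¹ • cross3 a b with hu
  set v : EuclideanSpace ℝ (Fin 3) := r - x with hv
  have hvne : v ≠ 0 := sub_ne_zero.mpr hrx
  have hg := coulomb_dir_deriv_aux v u hvne
  set D : EuclideanSpace ℝ (Fin 3) :=
    ‖v‖ ^ (-3 : ℤ) • (((3 / ‖v‖ ^ 2) * ⟪v, u⟫) • v - u) with hD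
  have hf1 : HasDerivAt (fun h : ℝ => h / 2) (1/2 : ℝ) 0 := by
    simpa using (hasDerivAt_id (0:ℝ)).div_const 2
  have hf2 : HasDerivAt (fun h : ℝ => -(h / 2)) (-(1/2) : ℝ) 0 := hf1.neg
  have hg1 : HasDerivAt (fun t : ℝ => ‖v - t • u‖ ^ (-3 : ℤ) • (v - t • u)) D ((0:ℝ)/2) := by
    rw [show (0:ℝ)/2 = 0 by norm_num]; exact hg
  have hg2 : HasDerivAt (fun t : ℝ => ‖v - t • u‖ ^ (-3 : ℤ) • (v - t • u)) D (-((0:ℝ)/2)) := by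
    rw [show -((0:ℝ)/2) = 0 by norm_num]; exact hg
  have h1 := hg1.scomp 0 hf1
  have h2 := hg2.scomp 0 hf2
  have e1 : (fun h : ℝ => coulomb (x + (h/2) • u) r)
      = fun h : ℝ => ‖v - (h/2) • u‖ ^ (-3:ℤ) • (v - (h/2) • u) := by
    funext h
    have : r - (x + (h/2) • u) = v - (h/2) • u := by rw [hv]; abel
    rw [coulomb, this]
  have e2 : (fun h : ℝ => coulomb (x - (h/2) • u) r)
      = fun h : ℝ => ‖v - (-(h/2)) • u‖ ^ (-3:ℤ) • (v - (-(h/2)) • u) := by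
    funext h
    have : r - (x - (h/2) • u) = v - (-(h/2)) • u := by rw [hv, neg_smul]; abel
    rw [coulomb, this]
  have h1' : HasDerivAt (fun h : ℝ => coulomb (x + (h/2) • u) r) ((1/2 : ℝ) • D) 0 := by
    rw [e1]; exact h1
  have h2' : HasDerivAt (fun h : ℝ => coulomb (x - (h/2) • u) r) ((-(1/2) : ℝ) • D) 0 := by
    rw [e2]; exact h2
  have h := h1'.sub h2'
  rw [show (1/2:ℝ) • D - (-(1/2):ℝ) • D = D by module] at h
  exact h
end

section
/- For vectors a, b, v ∈ ℝ³, the dipole-sheet direction identity holds: 3 ⟪v̂, a × b⟫ • v̂ − (a × b) = 2 (a × b) + 3 ⟪v̂, a⟫ • (b × v̂) − 3 ⟪v̂, b⟫ • (a × v̂), where v̂ is any unit vector. -/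
open scoped RealInnerProductSpace

theorem stmt4 (a b v : EuclideanSpace ℝ (Fin 3)) (hv : ‖v‖ = 1) :
    (3 * ⟪v, cross3 a b⟫) • v - cross3 a b =
      (2 : ℝ) • cross3 a b + (3 * ⟪v, a⟫) • cross3 b v - (3 * ⟪v, b⟫) • cross3 a v := by
  have hv2 : v 0 ^ 2 + v 1 ^ 2 + v 2 ^ 2 = 1 := by
    have h : ⟪v, v⟫ = 1 := by rw [real_inner_self_eq_norm_sq, hv]; norm_num
    rw [EuclideanSpace.inner_eq_star_dotProduct] at h
    simpa [EuclideanSpace.inner_eq_star_dotProduct, dotProduct, Fin.sum_univ_three,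
      sq] using h
  ext i
  fin_cases i <;>
    simp [cross3, crossProduct, EuclideanSpace.inner_eq_star_dotProduct, dotProduct,
      Fin.sum_univ_three]
  · linear_combination (3 * (a 1 * b 2 - a 2 * b 1)) * hv2
  · linear_combination (3 * (a 2 * b 0 - a 0 * b 2)) * hv2
  · linear_combination (3 * (a 0 * b 1 - a 1 * b 0)) * hv2
end

section
/- Let x, a, b, r ∈ ℝ³ with r ≠ x. Define G : ℝ × ℝ → ℝ³ by G(d, e) = (d • a) × (r − x)/‖r − x‖³ + (e • b) × (r − x − d • a)/‖r − x − d • a‖³ − (d • a) × (r − x − e • b)/‖r − x − e • b‖³ − (e • b) × (r − x)/‖r − x‖³ (the Biot–Savart sum over the four sides of the parallelogram with vertices x, x + d a, x + d a + e b, x + e b). Then the mixed second partial derivative ∂²G/∂d∂e at (0,0) equals ‖r−x‖⁻³ • ( 2 (a × b) + 3 ⟪v̂, a⟫ • (b × v̂) − 3 ⟪v̂, b⟫ • (a × v̂) ) where v̂ = (r − x)/‖r − x‖. -/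
open scoped RealInnerProductSpace

/-- Biot–Savart sum over the four sides of the parallelogram with vertices
`x`, `x + d • a`, `x + d • a + e • b`, `x + e • b`, evaluated at `r`. -/
noncomputable def bsPar (x a b r : EuclideanSpace ℝ (Fin 3)) (d e : ℝ) :
    EuclideanSpace ℝ (Fin 3) :=
  ‖r - x‖ ^ (-3 : ℤ) • cross3 (d • a) (r - x) +
    ‖r - x - d • a‖ ^ (-3 : ℤ) • cross3 (e • b) (r - x - d • a) -
    ‖r - x - e • b‖ ^ (-3 : ℤ) • cross3 (d • a) (r - x - e • b) -
    ‖r - x‖ ^ (-3 : ℤ) • cross3 (e • b) (r - x)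

lemma cross3_smul_left (s : ℝ) (a b : EuclideanSpace ℝ (Fin 3)) :
    cross3 (s • a) b = s • cross3 a b := by
  simp only [cross3, WithLp.equiv_apply, WithLp.ofLp_smul, map_smul, LinearMap.smul_apply, WithLp.equiv_symm_apply, WithLp.toLp_smul]

lemma cross3_smul_right (s : ℝ) (a b : EuclideanSpace ℝ (Fin 3)) :
    cross3 a (s • b) = s • cross3 a b := by
  simp only [cross3, WithLp.equiv_apply, WithLp.ofLp_smul, map_smul, WithLp.equiv_symm_apply, WithLp.toLp_smul]

lemma cross3_sub_right (a b c : EuclideanSpace ℝ (Fin 3)) :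
    cross3 a (b - c) = cross3 a b - cross3 a c := by
  simp only [cross3, WithLp.equiv_apply, WithLp.ofLp_sub, map_sub, WithLp.equiv_symm_apply, WithLp.toLp_sub]

lemma cross3_anticomm (a b : EuclideanSpace ℝ (Fin 3)) :
    cross3 b a = -cross3 a b := by
  rw [cross3, ← cross_anticomm, WithLp.equiv_symm_apply, WithLp.toLp_neg, cross3]
  rfl

lemma normzpow_deriv (c v : EuclideanSpace ℝ (Fin 3)) (hc : c ≠ 0) :
    HasDerivAt (fun t : ℝ => ‖c + t • v‖ ^ (-3 : ℤ))
      (-3 * ‖c‖ ^ (-5 : ℤ) * ⟪c, v⟫) 0 := by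
  have hnc : ‖c‖ ≠ 0 := norm_ne_zero_iff.mpr hc
  have hline : HasDerivAt (fun t : ℝ => c + t • v) v 0 := by
    simpa using ((hasDerivAt_id (0 : ℝ)).smul_const v).const_add c
  have hn : HasDerivAt (fun t : ℝ => ‖c + t • v‖ ^ 2) (2 * ⟪c, v⟫) 0 := by
    simpa using hline.norm_sq
  have hn0 : ‖c + (0:ℝ) • v‖ ^ 2 ≠ 0 := by simp [hc]
  have hsqrt : HasDerivAt (fun t : ℝ => Real.sqrt (‖c + t • v‖ ^ 2))
      (1 / (2 * Real.sqrt (‖c + (0:ℝ) • v‖ ^ 2)) * (2 * ⟪c, v⟫)) 0 :=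
    (Real.hasDerivAt_sqrt hn0).comp 0 hn
  have hpow : HasDerivAt (fun t : ℝ => (‖c + t • v‖ ^ 2) ^ 2)
      ((2 : ℕ) * (‖c + (0:ℝ) • v‖ ^ 2) ^ 1 * (2 * ⟪c, v⟫)) 0 := hn.pow 2
  have hdiv := hsqrt.div hpow (pow_ne_zero 2 hn0)
  have heq : (fun t : ℝ => Real.sqrt (‖c + t • v‖ ^ 2) / (‖c + t • v‖ ^ 2) ^ 2)
      = fun t : ℝ => ‖c + t • v‖ ^ (-3 : ℤ) := by
    funext t
    rw [Real.sqrt_sq (norm_nonneg _)]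
    rcases eq_or_ne ‖c + t • v‖ 0 with h | h
    · simp [h, zero_zpow]
    · rw [show ((-3 : ℤ)) = -((3:ℕ):ℤ) by norm_num, zpow_neg, zpow_natCast]
      field_simp
  simp only [Pi.div_def] at hdiv
  rw [heq] at hdiv
  refine hdiv.congr_deriv ?_
  have h0 : ‖c + (0:ℝ) • v‖ = ‖c‖ := by simp
  rw [h0, Real.sqrt_sq (norm_nonneg _),
    show ((-5 : ℤ)) = -((5:ℕ):ℤ) by norm_num, zpow_neg, zpow_natCast]
  field_simp
  ring

lemma key_deriv (c v u z : EuclideanSpace ℝ (Fin 3)) (hc : c ≠ 0) :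
    HasDerivAt (fun t : ℝ => ‖c - t • v‖ ^ (-3 : ℤ) • (u - t • z))
      ((3 * ‖c‖ ^ (-5 : ℤ) * ⟪c, v⟫) • u - ‖c‖ ^ (-3 : ℤ) • z) 0 := by
  have hs : HasDerivAt (fun t : ℝ => ‖c - t • v‖ ^ (-3 : ℤ))
      (3 * ‖c‖ ^ (-5 : ℤ) * ⟪c, v⟫) 0 := by
    have := normzpow_deriv c (-v) hc
    simp only [smul_neg, ← sub_eq_add_neg, inner_neg_right] at this
    convert this using 1
    ring
  have hu : HasDerivAt (fun t : ℝ => u - t • z) (-z) 0 := by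
    simpa using ((hasDerivAt_id (0 : ℝ)).smul_const z).const_sub u
  have := hs.smul hu
  simp only [zero_smul, sub_zero] at this
  refine this.congr_deriv ?_
  rw [smul_neg]
  abel

theorem stmt12 (x a b r : EuclideanSpace ℝ (Fin 3)) (hrx : r ≠ x) :
    deriv (fun d : ℝ => deriv (fun e : ℝ => bsPar x a b r d e) 0) 0 =
      ‖r - x‖ ^ (-3 : ℤ) •
        ((2 : ℝ) • cross3 a b +
          (3 * ⟪‖r - x‖⁻¹ • (r - x), a⟫) • cross3 b (‖r - x‖⁻¹ • (r - x)) -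
          (3 * ⟪‖r - x‖⁻¹ • (r - x), b⟫) • cross3 a (‖r - x‖⁻¹ • (r - x))) := by
  have hw : r - x ≠ 0 := sub_ne_zero.mpr hrx
  have hnw : ‖r - x‖ ≠ 0 := norm_ne_zero_iff.mpr hw
  -- inner derivative
  have hinner : ∀ d : ℝ, deriv (fun e : ℝ => bsPar x a b r d e) 0
      = ‖r - x - d • a‖ ^ (-3 : ℤ) • (cross3 b (r - x) - d • cross3 b a)
        - (d * (3 * ‖r - x‖ ^ (-5 : ℤ) * ⟪r - x, b⟫)) • cross3 a (r - x)
        + (d * ‖r - x‖ ^ (-3 : ℤ)) • cross3 a b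
        - ‖r - x‖ ^ (-3 : ℤ) • cross3 b (r - x) := by
    intro d
    have h1 : HasDerivAt (fun _ : ℝ => ‖r - x‖ ^ (-3 : ℤ) • cross3 (d • a) (r - x))
        0 0 := hasDerivAt_const _ _
    have h2 : HasDerivAt
        (fun e : ℝ => ‖r - x - d • a‖ ^ (-3 : ℤ) • cross3 (e • b) (r - x - d • a))
        (‖r - x - d • a‖ ^ (-3 : ℤ) • cross3 b (r - x - d • a)) 0 := by
      have hf : (fun e : ℝ => ‖r - x - d • a‖ ^ (-3 : ℤ) • cross3 (e • b) (r - x - d • a))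
          = fun e : ℝ => e • (‖r - x - d • a‖ ^ (-3 : ℤ) • cross3 b (r - x - d • a)) := by
        funext e; rw [cross3_smul_left, smul_comm]
      rw [hf]
      simpa using (hasDerivAt_id (0 : ℝ)).smul_const
        (‖r - x - d • a‖ ^ (-3 : ℤ) • cross3 b (r - x - d • a))
    have h3 : HasDerivAt
        (fun e : ℝ => ‖r - x - e • b‖ ^ (-3 : ℤ) • cross3 (d • a) (r - x - e • b))
        ((3 * ‖r - x‖ ^ (-5 : ℤ) * ⟪r - x, b⟫) • cross3 (d • a) (r - x)
          - ‖r - x‖ ^ (-3 : ℤ) • cross3 (d • a) b) 0 := by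
      have hf : (fun e : ℝ => ‖r - x - e • b‖ ^ (-3 : ℤ) • cross3 (d • a) (r - x - e • b))
          = fun e : ℝ => ‖r - x - e • b‖ ^ (-3 : ℤ) •
              (cross3 (d • a) (r - x) - e • cross3 (d • a) b) := by
        funext e; rw [cross3_sub_right, cross3_smul_right]
      rw [hf]
      exact key_deriv (r - x) b (cross3 (d • a) (r - x)) (cross3 (d • a) b) hw
    have h4 : HasDerivAt (fun e : ℝ => ‖r - x‖ ^ (-3 : ℤ) • cross3 (e • b) (r - x))
        (‖r - x‖ ^ (-3 : ℤ) • cross3 b (r - x)) 0 := by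
      have hf : (fun e : ℝ => ‖r - x‖ ^ (-3 : ℤ) • cross3 (e • b) (r - x))
          = fun e : ℝ => e • (‖r - x‖ ^ (-3 : ℤ) • cross3 b (r - x)) := by
        funext e; rw [cross3_smul_left, smul_comm]
      rw [hf]
      simpa using (hasDerivAt_id (0 : ℝ)).smul_const (‖r - x‖ ^ (-3 : ℤ) • cross3 b (r - x))
    have hD : HasDerivAt (fun e : ℝ => bsPar x a b r d e)
        (0 + ‖r - x - d • a‖ ^ (-3 : ℤ) • cross3 b (r - x - d • a)
          - ((3 * ‖r - x‖ ^ (-5 : ℤ) * ⟪r - x, b⟫) • cross3 (d • a) (r - x)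
            - ‖r - x‖ ^ (-3 : ℤ) • cross3 (d • a) b)
          - ‖r - x‖ ^ (-3 : ℤ) • cross3 b (r - x)) 0 := by
      simp only [bsPar]
      exact ((h1.add h2).sub h3).sub h4
    rw [hD.deriv]
    rw [cross3_smul_left (s := d) (a := a) (b := r - x),
      cross3_smul_left (s := d) (a := a) (b := b),
      show cross3 b (r - x - d • a) = cross3 b (r - x) - d • cross3 b a by
        rw [cross3_sub_right, cross3_smul_right]]
    module
  have hF : (fun d : ℝ => deriv (fun e : ℝ => bsPar x a b r d e) 0)
      = fun d : ℝ =>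
        ‖r - x - d • a‖ ^ (-3 : ℤ) • (cross3 b (r - x) - d • cross3 b a)
        - (d * (3 * ‖r - x‖ ^ (-5 : ℤ) * ⟪r - x, b⟫)) • cross3 a (r - x)
        + (d * ‖r - x‖ ^ (-3 : ℤ)) • cross3 a b
        - ‖r - x‖ ^ (-3 : ℤ) • cross3 b (r - x) := funext hinner
  rw [hF]
  have g1 := key_deriv (r - x) a (cross3 b (r - x)) (cross3 b a) hw
  have g2 : HasDerivAt
      (fun d : ℝ => (d * (3 * ‖r - x‖ ^ (-5 : ℤ) * ⟪r - x, b⟫)) • cross3 a (r - x))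
      ((3 * ‖r - x‖ ^ (-5 : ℤ) * ⟪r - x, b⟫) • cross3 a (r - x)) 0 := by
    simpa using ((hasDerivAt_id (0 : ℝ)).mul_const
      (3 * ‖r - x‖ ^ (-5 : ℤ) * ⟪r - x, b⟫)).smul_const (cross3 a (r - x))
  have g3 : HasDerivAt (fun d : ℝ => (d * ‖r - x‖ ^ (-3 : ℤ)) • cross3 a b)
      (‖r - x‖ ^ (-3 : ℤ) • cross3 a b) 0 := by
    simpa using ((hasDerivAt_id (0 : ℝ)).mul_const (‖r - x‖ ^ (-3 : ℤ))).smul_const (cross3 a b)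
  have g4 : HasDerivAt (fun _ : ℝ => ‖r - x‖ ^ (-3 : ℤ) • cross3 b (r - x)) 0 0 :=
    hasDerivAt_const _ _
  erw [(((g1.sub g2).add g3).sub g4).deriv]
  rw [cross3_smul_right (s := ‖r - x‖⁻¹) (a := b) (b := r - x),
    cross3_smul_right (s := ‖r - x‖⁻¹) (a := a) (b := r - x),
    real_inner_smul_left, real_inner_smul_left,
    cross3_anticomm b a]
  match_scalars
  all_goals
    simp only [show ((-5 : ℤ)) = -((5:ℕ):ℤ) from by norm_num,
      show ((-3 : ℤ)) = -((3:ℕ):ℤ) from by norm_num, zpow_neg, zpow_natCast]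
  all_goals field_simp
  all_goals first | ring1 | (left; ring1)
end

section
/- (Infinitesimal similitude, externalized) With notation as above, let v̂ = (r−x)/‖r−x‖. Then the mixed partial ∂²G/∂d∂e(0,0) of the four-sided Biot–Savart sum equals the dipole direction field ‖r−x‖⁻³ • ( 3 ⟪v̂, a × b⟫ • v̂ − a × b ). -/
open scoped RealInnerProductSpace

abbrev E3 := EuclideanSpace ℝ (Fin 3)

lemma cross3_smul_left_s13 (s : ℝ) (a v : E3) : cross3 (s • a) v = s • cross3 a v := by
  simp [cross3]

lemma cross3_add_right (a v w : E3) : cross3 a (v + w) = cross3 a v + cross3 a w := by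
  simp [cross3]

lemma cross3_smul_right_s13 (s : ℝ) (a v : E3) : cross3 a (s • v) = s • cross3 a v := by
  simp [cross3]

lemma cross3_neg_right (a v : E3) : cross3 a (-v) = - cross3 a v := by
  simpa using cross3_smul_right_s13 (-1) a v

lemma cross3_comm (a b : E3) : cross3 b a = - cross3 a b := by
  unfold cross3
  rw [← cross_anticomm]
  rfl

lemma triple (u a b : E3) :
    ⟪u,a⟫ • cross3 b u - ⟪u,b⟫ • cross3 a u
      = ⟪u, cross3 a b⟫ • u - ⟪u,u⟫ • cross3 a b := by
  ext i
  fin_cases i <;>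
    simp [cross3, crossProduct, PiLp.inner_apply, RCLike.inner_apply, Fin.sum_univ_three,
      PiLp.smul_apply, PiLp.sub_apply, smul_eq_mul, EuclideanSpace.real_norm_sq_eq] <;> ring

noncomputable def cross3L (a : E3) : E3 →L[ℝ] E3 :=
  LinearMap.toContinuousLinearMap
  { toFun := cross3 a
    map_add' := fun v w => cross3_add_right a v w
    map_smul' := fun s v => cross3_smul_right_s13 s a v }

@[simp] lemma cross3L_apply (a v : E3) : cross3L a v = cross3 a v := rfl

lemma inner_zpow_half (w : E3) (n : ℤ) : (⟪w, w⟫ : ℝ) ^ ((n : ℝ)/2) = ‖w‖ ^ n := by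
  rw [real_inner_self_eq_norm_sq, ← Real.rpow_natCast ‖w‖ 2, ← Real.rpow_mul (norm_nonneg w)]
  rw [show ((2 : ℕ) : ℝ) * ((n : ℝ)/2) = (n : ℝ) by push_cast; ring, Real.rpow_intCast]

lemma hasDerivAt_line (u v : E3) : HasDerivAt (fun t : ℝ => u - t • v) (-v) 0 := by
  simpa using ((hasDerivAt_id (0:ℝ)).smul_const v).const_sub u

lemma hasDerivAt_inv3 (u v : E3) (hu : u ≠ 0) :
    HasDerivAt (fun t : ℝ => ‖u - t • v‖ ^ (-3 : ℤ)) (3 * ‖u‖ ^ (-5 : ℤ) * ⟪u, v⟫) 0 := by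
  have hc := hasDerivAt_line u v
  have hin : HasDerivAt (fun t : ℝ => (⟪u - t • v, u - t • v⟫ : ℝ)) (-(2 * ⟪u, v⟫)) 0 := by
    have h := HasDerivAt.inner ℝ hc hc
    simp only [zero_smul, sub_zero, inner_neg_left, inner_neg_right] at h
    exact h.congr_deriv (by rw [real_inner_comm]; ring)
  have hne : (⟪u, u⟫ : ℝ) ≠ 0 := by
    rw [real_inner_self_eq_norm_sq]
    exact pow_ne_zero 2 (norm_ne_zero_iff.mpr hu)
  have h2 := hin.rpow_const (p := (-3 : ℝ)/2) (Or.inl (by simpa using hne))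
  have hfun : (fun t : ℝ => ‖u - t • v‖ ^ (-3 : ℤ))
      = fun t => (⟪u - t • v, u - t • v⟫ : ℝ) ^ ((-3 : ℝ)/2) := by
    funext t
    rw [show ((-3 : ℝ)/2) = (((-3 : ℤ) : ℝ)/2) by norm_num, inner_zpow_half]
  rw [hfun]
  convert h2 using 1
  simp only [zero_smul, sub_zero]
  rw [show ((-3 : ℝ)/2 - 1) = (((-5 : ℤ) : ℝ)/2) by norm_num, inner_zpow_half]
  ring

lemma innerDeriv (u a b : E3) (hu : u ≠ 0) (d : ℝ) :
    deriv (fun e : ℝ =>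
      ‖u‖ ^ (-3 : ℤ) • cross3 (d • a) u +
      ‖u - d • a‖ ^ (-3 : ℤ) • cross3 (e • b) (u - d • a) -
      ‖u - e • b‖ ^ (-3 : ℤ) • cross3 (d • a) (u - e • b) -
      ‖u‖ ^ (-3 : ℤ) • cross3 (e • b) u) 0
    = ‖u - d • a‖ ^ (-3 : ℤ) • cross3 b (u - d • a)
      - d • ((3 * ‖u‖ ^ (-5 : ℤ) * ⟪u, b⟫) • cross3 a u - ‖u‖ ^ (-3 : ℤ) • cross3 a b)
      - ‖u‖ ^ (-3 : ℤ) • cross3 b u := by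
  have hfun : (fun e : ℝ =>
      ‖u‖ ^ (-3 : ℤ) • cross3 (d • a) u +
      ‖u - d • a‖ ^ (-3 : ℤ) • cross3 (e • b) (u - d • a) -
      ‖u - e • b‖ ^ (-3 : ℤ) • cross3 (d • a) (u - e • b) -
      ‖u‖ ^ (-3 : ℤ) • cross3 (e • b) u)
      = fun e : ℝ =>
      (‖u‖ ^ (-3 : ℤ) • cross3 (d • a) u
        + e • (‖u - d • a‖ ^ (-3 : ℤ) • cross3 b (u - d • a)))
      - d • (‖u - e • b‖ ^ (-3 : ℤ) • cross3 a (u - e • b))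
      - e • (‖u‖ ^ (-3 : ℤ) • cross3 b u) := by
    funext e
    simp only [cross3_smul_left_s13]
    module
  rw [hfun]
  have h2 : HasDerivAt (fun e : ℝ => ‖u‖ ^ (-3 : ℤ) • cross3 (d • a) u
        + e • (‖u - d • a‖ ^ (-3 : ℤ) • cross3 b (u - d • a)))
      (‖u - d • a‖ ^ (-3 : ℤ) • cross3 b (u - d • a)) 0 := by
    exact ((hasDerivAt_const (0:ℝ) (‖u‖ ^ (-3 : ℤ) • cross3 (d • a) u)).add
      ((hasDerivAt_id (0:ℝ)).smul_const (‖u - d • a‖ ^ (-3 : ℤ) • cross3 b (u - d • a)))).congr_deriv (by simp)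
  have hg : HasDerivAt (fun e : ℝ => cross3 a (u - e • b)) (-(cross3 a b)) 0 := by
    have h := (cross3L a).hasFDerivAt.comp_hasDerivAt 0 (hasDerivAt_line u b)
    simpa [Function.comp_def, cross3_neg_right] using h
  have h3 : HasDerivAt (fun e : ℝ => ‖u - e • b‖ ^ (-3 : ℤ) • cross3 a (u - e • b))
      (‖u‖ ^ (-3 : ℤ) • -(cross3 a b) + (3 * ‖u‖ ^ (-5 : ℤ) * ⟪u, b⟫) • cross3 a u) 0 := by
    exact ((hasDerivAt_inv3 u b hu).smul hg).congr_deriv (by simp)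
  have h4 : HasDerivAt (fun e : ℝ => e • (‖u‖ ^ (-3 : ℤ) • cross3 b u))
      (‖u‖ ^ (-3 : ℤ) • cross3 b u) 0 := by
    simpa using (hasDerivAt_id (0:ℝ)).smul_const (‖u‖ ^ (-3 : ℤ) • cross3 b u)
  have H := (h2.sub (h3.const_smul d)).sub h4
  refine H.deriv.trans ?_
  module

lemma outerDeriv (u a b : E3) (hu : u ≠ 0) :
    deriv (fun d : ℝ =>
      ‖u - d • a‖ ^ (-3 : ℤ) • cross3 b (u - d • a)
      - d • ((3 * ‖u‖ ^ (-5 : ℤ) * ⟪u, b⟫) • cross3 a u - ‖u‖ ^ (-3 : ℤ) • cross3 a b)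
      - ‖u‖ ^ (-3 : ℤ) • cross3 b u) 0
    = ‖u‖ ^ (-3 : ℤ) • -(cross3 b a) + (3 * ‖u‖ ^ (-5 : ℤ) * ⟪u, a⟫) • cross3 b u
      - ((3 * ‖u‖ ^ (-5 : ℤ) * ⟪u, b⟫) • cross3 a u - ‖u‖ ^ (-3 : ℤ) • cross3 a b) := by
  have hg : HasDerivAt (fun d : ℝ => cross3 b (u - d • a)) (-(cross3 b a)) 0 := by
    have h := (cross3L b).hasFDerivAt.comp_hasDerivAt 0 (hasDerivAt_line u a)
    simpa [Function.comp_def, cross3_neg_right] using h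
  have h1 : HasDerivAt (fun d : ℝ => ‖u - d • a‖ ^ (-3 : ℤ) • cross3 b (u - d • a))
      (‖u‖ ^ (-3 : ℤ) • -(cross3 b a) + (3 * ‖u‖ ^ (-5 : ℤ) * ⟪u, a⟫) • cross3 b u) 0 := by
    exact ((hasDerivAt_inv3 u a hu).smul hg).congr_deriv (by simp)
  have h2 : HasDerivAt (fun d : ℝ =>
      d • ((3 * ‖u‖ ^ (-5 : ℤ) * ⟪u, b⟫) • cross3 a u - ‖u‖ ^ (-3 : ℤ) • cross3 a b))
      ((3 * ‖u‖ ^ (-5 : ℤ) * ⟪u, b⟫) • cross3 a u - ‖u‖ ^ (-3 : ℤ) • cross3 a b) 0 := by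
    simpa using (hasDerivAt_id (0:ℝ)).smul_const
      ((3 * ‖u‖ ^ (-5 : ℤ) * ⟪u, b⟫) • cross3 a u - ‖u‖ ^ (-3 : ℤ) • cross3 a b)
  have H := (h1.sub h2).sub (hasDerivAt_const (0:ℝ) (‖u‖ ^ (-3 : ℤ) • cross3 b u))
  refine H.deriv.trans ?_
  module

lemma finalId (u a b : E3) (hu : u ≠ 0) :
    ‖u‖ ^ (-3 : ℤ) • -(cross3 b a) + (3 * ‖u‖ ^ (-5 : ℤ) * ⟪u, a⟫) • cross3 b u
      - ((3 * ‖u‖ ^ (-5 : ℤ) * ⟪u, b⟫) • cross3 a u - ‖u‖ ^ (-3 : ℤ) • cross3 a b)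
    = ‖u‖ ^ (-3 : ℤ) •
        ((3 * ⟪‖u‖⁻¹ • u, cross3 a b⟫) • (‖u‖⁻¹ • u) - cross3 a b) := by
  have hn : ‖u‖ ≠ 0 := norm_ne_zero_iff.mpr hu
  rw [cross3_comm a b]
  calc ‖u‖ ^ (-3 : ℤ) • - -cross3 a b + (3 * ‖u‖ ^ (-5 : ℤ) * ⟪u, a⟫) • cross3 b u
      - ((3 * ‖u‖ ^ (-5 : ℤ) * ⟪u, b⟫) • cross3 a u - ‖u‖ ^ (-3 : ℤ) • cross3 a b)
      = (3 * ‖u‖ ^ (-5 : ℤ)) • (⟪u, a⟫ • cross3 b u - ⟪u, b⟫ • cross3 a u)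
        + (2 * ‖u‖ ^ (-3 : ℤ)) • cross3 a b := by module
    _ = (3 * ‖u‖ ^ (-5 : ℤ)) • (⟪u, cross3 a b⟫ • u - ⟪u, u⟫ • cross3 a b)
        + (2 * ‖u‖ ^ (-3 : ℤ)) • cross3 a b := by rw [triple]
    _ = ‖u‖ ^ (-3 : ℤ) •
        ((3 * ⟪‖u‖⁻¹ • u, cross3 a b⟫) • (‖u‖⁻¹ • u) - cross3 a b) := by
        rw [real_inner_self_eq_norm_sq, real_inner_smul_left]
        match_scalars
        · field_simp
        · field_simp
          norm_cast

theorem stmt13 (x a b r : EuclideanSpace ℝ (Fin 3)) (hrx : r ≠ x) :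
    deriv (fun d : ℝ => deriv (fun e : ℝ => bsPar x a b r d e) 0) 0 =
      ‖r - x‖ ^ (-3 : ℤ) •
        ((3 * ⟪‖r - x‖⁻¹ • (r - x), cross3 a b⟫) • (‖r - x‖⁻¹ • (r - x)) -
          cross3 a b) := by
  have hu : r - x ≠ 0 := sub_ne_zero.mpr hrx
  have h1 : (fun d : ℝ => deriv (fun e : ℝ => bsPar x a b r d e) 0)
      = fun d : ℝ =>
        ‖r - x - d • a‖ ^ (-3 : ℤ) • cross3 b (r - x - d • a)
        - d • ((3 * ‖r - x‖ ^ (-5 : ℤ) * ⟪r - x, b⟫) • cross3 a (r - x)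
            - ‖r - x‖ ^ (-3 : ℤ) • cross3 a b)
        - ‖r - x‖ ^ (-3 : ℤ) • cross3 b (r - x) := by
    funext d
    simp only [bsPar]
    exact innerDeriv (r - x) a b hu d
  rw [h1, outerDeriv (r - x) a b hu, finalId (r - x) a b hu]
end
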